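/- Let T > 0 and let u be a classical solution of the Fornberg–Whitham equation on [0,T)×ℝ. Assume that either u(t,x) ≥ 0 for all (t,x) ∈ [0,T)×ℝ or u(t,x) ≤ 0 for all (t,x) ∈ [0,T)×ℝ, and that the quantity H(t) = ∫_ℝ u(t,x) dx is finite and independent of t ∈ [0,T). If u vanishes identically on a nonempty open subset of (0,T)×ℝ, then u(t,x) = 0 for all (t,x) ∈ [0,T)×ℝ. -/

import Mathlib

open MeasureTheory Set

/-- The inverse Helmholtz operator `Λ⁻² = (1 - ∂ₓ²)⁻¹` on the line, given by
convolution with the kernel `e^{-|x|}/2`. -/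
noncomputable def lam2 (w : ℝ → ℝ) (x : ℝ) : ℝ :=
  (1/2) * ∫ y : ℝ, Real.exp (-|x - y|) * w y

/-- A classical solution of the Fornberg-Whitham equation
`uₜ + (3/2) u uₓ = ∂ₓΛ⁻²u` on `[0,T) × ℝ`. -/
def IsFWSolution (T : ℝ) (u : ℝ → ℝ → ℝ) : Prop :=
  (∀ t ∈ Set.Ico (0:ℝ) T,
    ContDiff ℝ 1 (u t) ∧
    (∃ C : ℝ, ∀ x, |u t x| ≤ C) ∧ Integrable (u t) ∧
    (∃ C : ℝ, ∀ x, |deriv (u t) x| ≤ C) ∧ Integrable (deriv (u t))) ∧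
  (∀ t ∈ Set.Ioo (0:ℝ) T, ∀ x : ℝ, DifferentiableAt ℝ (fun s => u s x) t) ∧
  (∀ t ∈ Set.Ioo (0:ℝ) T, ∀ x : ℝ,
    deriv (fun s => u s x) t + (3/2) * u t x * deriv (u t) x =
      deriv (lam2 (u t)) x)


section FWaux
open Filter

lemma intOn_Iic {w : ℝ → ℝ} (hw : Continuous w) (hwi : Integrable w) (z : ℝ) :
    IntegrableOn (fun y => Real.exp y * w y) (Iic z) := by
  refine Integrable.mono' ((hwi.norm.const_mul (Real.exp z)).restrict (s := Iic z))
    ((Real.continuous_exp.mul hw).aestronglyMeasurable.restrict) ?_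
  rw [ae_restrict_iff' measurableSet_Iic]
  refine Eventually.of_forall fun y hy => ?_
  rw [Real.norm_eq_abs, Real.norm_eq_abs, abs_mul, abs_of_pos (Real.exp_pos y)]
  exact mul_le_mul_of_nonneg_right (Real.exp_le_exp.2 hy) (abs_nonneg _)

lemma intOn_Ioi {w : ℝ → ℝ} (hw : Continuous w) (hwi : Integrable w) (z : ℝ) :
    IntegrableOn (fun y => Real.exp (-y) * w y) (Ioi z) := by
  refine Integrable.mono' ((hwi.norm.const_mul (Real.exp (-z))).restrict (s := Ioi z))
    ((Real.continuous_exp.comp continuous_neg |>.mul hw).aestronglyMeasurable.restrict) ?_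
  rw [ae_restrict_iff' measurableSet_Ioi]
  refine Eventually.of_forall fun y hy => ?_
  rw [Real.norm_eq_abs, Real.norm_eq_abs, abs_mul, abs_of_pos (Real.exp_pos _)]
  exact mul_le_mul_of_nonneg_right (Real.exp_le_exp.2 (by simp only [mem_Ioi] at hy; linarith)) (abs_nonneg _)

lemma lam2_split {w : ℝ → ℝ} (hw : Continuous w) (hwi : Integrable w) (z : ℝ) :
    lam2 w z = (1/2) * (Real.exp (-z) * (∫ y in Iic z, Real.exp y * w y)
      + Real.exp z * (∫ y in Ioi z, Real.exp (-y) * w y)) := by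
  have hint : Integrable (fun y => Real.exp (-|z - y|) * w y) := by
    refine Integrable.mono' hwi.norm
      (((((continuous_const.sub continuous_id).abs).neg).rexp.mul hw).aestronglyMeasurable) ?_
    refine Eventually.of_forall fun y => ?_
    have h1 : Real.exp (-|z - y|) ≤ 1 := Real.exp_le_one_iff.2 (neg_nonpos.2 (abs_nonneg _))
    have h2 : (0:ℝ) < Real.exp (-|z - y|) := Real.exp_pos _
    rw [Real.norm_eq_abs, Real.norm_eq_abs, abs_mul, abs_of_pos h2]
    nlinarith [abs_nonneg (w y)]
  rw [lam2, ← intervalIntegral.integral_Iic_add_Ioi hint.integrableOn hint.integrableOn]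
  have e1 : ∫ y in Iic z, Real.exp (-|z - y|) * w y
      = Real.exp (-z) * ∫ y in Iic z, Real.exp y * w y := by
    rw [← integral_const_mul]
    refine setIntegral_congr_fun measurableSet_Iic fun y hy => ?_
    have : |z - y| = z - y := abs_of_nonneg (by simpa [sub_nonneg] using hy)
    rw [this, ← mul_assoc, ← Real.exp_add]
    ring_nf
  have e2 : ∫ y in Ioi z, Real.exp (-|z - y|) * w y
      = Real.exp z * ∫ y in Ioi z, Real.exp (-y) * w y := by
    rw [← integral_const_mul]
    refine setIntegral_congr_fun measurableSet_Ioi fun y hy => ?_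
    have : |z - y| = y - z := by
      rw [abs_of_nonpos (by simp only [mem_Ioi] at hy; linarith)]; ring
    rw [this, ← mul_assoc, ← Real.exp_add]
    ring_nf
  rw [e1, e2]

lemma hasDerivAt_F {w : ℝ → ℝ} (hw : Continuous w) (hwi : Integrable w) (x : ℝ) :
    HasDerivAt (fun z => ∫ y in Iic z, Real.exp y * w y) (Real.exp x * w x) x := by
  have g : Continuous fun y => Real.exp y * w y := Real.continuous_exp.mul hw
  have heq : (fun z => ∫ y in Iic z, Real.exp y * w y)
      = fun z => (∫ y in Iic (0:ℝ), Real.exp y * w y) + ∫ y in (0:ℝ)..z, Real.exp y * w y := by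
    funext z
    rw [← intervalIntegral.integral_Iic_sub_Iic (intOn_Iic hw hwi 0) (intOn_Iic hw hwi z)]
    ring
  rw [heq]
  exact (intervalIntegral.integral_hasDerivAt_right (g.intervalIntegrable 0 x)
    (g.aestronglyMeasurable.stronglyMeasurableAtFilter) g.continuousAt).const_add _

lemma hasDerivAt_G {w : ℝ → ℝ} (hw : Continuous w) (hwi : Integrable w) (x : ℝ) :
    HasDerivAt (fun z => ∫ y in Ioi z, Real.exp (-y) * w y) (-(Real.exp (-x) * w x)) x := by
  have hw' : Continuous fun y => w (-y) := hw.comp continuous_neg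
  have hwi' : Integrable fun y => w (-y) := by
    simpa using hwi.comp_neg
  have heq : (fun z => ∫ y in Ioi z, Real.exp (-y) * w y)
      = (fun a => ∫ y in Iic a, Real.exp y * w (-y)) ∘ (fun z => -z) := by
    funext z
    have := integral_comp_neg_Iic (-z) (fun y => Real.exp (-y) * w y)
    simp only [neg_neg] at this
    simp only [Function.comp, ← this]
  rw [heq]
  have h1 : HasDerivAt (fun a => ∫ y in Iic a, Real.exp y * w (-y))
      (Real.exp (-x) * w x) (-x) := by
    simpa using hasDerivAt_F hw' hwi' (-x)
  simpa using h1.comp x (hasDerivAt_neg x)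

lemma hasDerivAt_lam2 {w : ℝ → ℝ} (hw : Continuous w) (hwi : Integrable w) (x : ℝ) :
    HasDerivAt (lam2 w)
      ((1/2) * (Real.exp x * (∫ y in Ioi x, Real.exp (-y) * w y)
        - Real.exp (-x) * (∫ y in Iic x, Real.exp y * w y))) x := by
  have heq : lam2 w = fun z => (1/2) * (Real.exp (-z) * (∫ y in Iic z, Real.exp y * w y)
      + Real.exp z * (∫ y in Ioi z, Real.exp (-y) * w y)) := funext (lam2_split hw hwi)
  rw [heq]
  have he1 : HasDerivAt (fun z : ℝ => Real.exp (-z)) (-Real.exp (-x)) x := by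
    simpa [Function.comp_def] using (Real.hasDerivAt_exp (-x)).comp x (hasDerivAt_neg x)
  have he2 : HasDerivAt Real.exp (Real.exp x) x := Real.hasDerivAt_exp x
  have h := ((he1.mul (hasDerivAt_F hw hwi x)).add (he2.mul (hasDerivAt_G hw hwi x))).const_mul
    (1/2 : ℝ)
  refine h.congr_deriv ?_
  ring

lemma nonneg_integral_zero {w : ℝ → ℝ} (hw : Continuous w) (hwi : Integrable w)
    (hpos : ∀ x, 0 ≤ w x) (h : (∫ x : ℝ, w x) = 0) : ∀ x, w x = 0 := by
  have hae : w =ᵐ[volume] 0 :=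
    (integral_eq_zero_iff_of_nonneg hpos hwi).mp h
  have := (Continuous.ae_eq_iff_eq volume hw continuous_const).mp hae
  exact fun x => congrFun this x

lemma slice_zero {w : ℝ → ℝ} (hw : Continuous w) (hwi : Integrable w)
    (hpos : ∀ x, 0 ≤ w x) {x₁ x₂ : ℝ} (h12 : x₁ < x₂)
    (hmid : ∀ x ∈ Icc x₁ x₂, w x = 0)
    (h1 : deriv (lam2 w) x₁ = 0) (h2 : deriv (lam2 w) x₂ = 0) :
    ∀ x, w x = 0 := by
  set F := ∫ y in Iic x₁, Real.exp y * w y with hF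
  set G := ∫ y in Ioi x₂, Real.exp (-y) * w y with hG
  -- rewrite the two integrals at the other endpoint
  have hFeq : (∫ y in Iic x₂, Real.exp y * w y) = F := by
    rw [← Iic_union_Ioc_eq_Iic h12.le,
      setIntegral_union (Iic_disjoint_Ioc le_rfl) measurableSet_Ioc
        (intOn_Iic hw hwi x₁) ((intOn_Iic hw hwi x₂).mono_set Ioc_subset_Iic_self)]
    have : (∫ y in Ioc x₁ x₂, Real.exp y * w y) = 0 :=
      setIntegral_eq_zero_of_forall_eq_zero fun y hy => by
        rw [hmid y ⟨hy.1.le, hy.2⟩, mul_zero]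
    rw [this, add_zero]
  have hGeq : (∫ y in Ioi x₁, Real.exp (-y) * w y) = G := by
    rw [← Ioc_union_Ioi_eq_Ioi h12.le,
      setIntegral_union (Ioc_disjoint_Ioi le_rfl) measurableSet_Ioi
        ((intOn_Ioi hw hwi x₁).mono_set Ioc_subset_Ioi_self) (intOn_Ioi hw hwi x₂)]
    have : (∫ y in Ioc x₁ x₂, Real.exp (-y) * w y) = 0 :=
      setIntegral_eq_zero_of_forall_eq_zero fun y hy => by
        rw [hmid y ⟨hy.1.le, hy.2⟩, mul_zero]
    rw [this, zero_add]
  have hd1 := (hasDerivAt_lam2 hw hwi x₁).deriv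
  have hd2 := (hasDerivAt_lam2 hw hwi x₂).deriv
  rw [h1] at hd1; rw [h2] at hd2
  rw [hGeq] at hd1; rw [hFeq] at hd2
  -- extract the two linear relations
  have e1 : Real.exp x₁ * G = Real.exp (-x₁) * F := by
    have := hd1.symm; nlinarith [this]
  have e2 : Real.exp x₂ * G = Real.exp (-x₂) * F := by
    have := hd2.symm; nlinarith [this]
  -- deduce F = 0, G = 0
  have hFG : F = 0 ∧ G = 0 := by
    have p1 : (0:ℝ) < Real.exp x₁ := Real.exp_pos _
    have p2 : (0:ℝ) < Real.exp x₂ := Real.exp_pos _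
    have q1 : (0:ℝ) < Real.exp (-x₁) := Real.exp_pos _
    have q2 : (0:ℝ) < Real.exp (-x₂) := Real.exp_pos _
    have hlt : Real.exp x₁ < Real.exp x₂ := Real.exp_lt_exp.2 h12
    have hlt' : Real.exp (-x₂) < Real.exp (-x₁) := Real.exp_lt_exp.2 (by linarith)
    have hFnn : 0 ≤ F := setIntegral_nonneg measurableSet_Iic fun y _ =>
      mul_nonneg (Real.exp_pos y).le (hpos y)
    have hGnn : 0 ≤ G := setIntegral_nonneg measurableSet_Ioi fun y _ =>
      mul_nonneg (Real.exp_pos _).le (hpos y)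
    constructor <;> nlinarith
  obtain ⟨hF0, hG0⟩ := hFG
  -- w vanishes a.e. on the two tails
  have hA1 : ∀ᵐ y, y ∈ Iic x₁ → w y = 0 := by
    have h := (setIntegral_eq_zero_iff_of_nonneg_ae
      (Eventually.of_forall fun y => mul_nonneg (Real.exp_pos y).le (hpos y))
      (intOn_Iic hw hwi x₁)).mp hF0
    rw [EventuallyEq, ae_restrict_iff' measurableSet_Iic] at h
    filter_upwards [h] with y hy hmem
    have := hy hmem
    simpa [(Real.exp_pos y).ne'] using this
  have hA2 : ∀ᵐ y, y ∈ Ioi x₂ → w y = 0 := by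
    have h := (setIntegral_eq_zero_iff_of_nonneg_ae
      (Eventually.of_forall fun y => mul_nonneg (Real.exp_pos _).le (hpos y))
      (intOn_Ioi hw hwi x₂)).mp hG0
    rw [EventuallyEq, ae_restrict_iff' measurableSet_Ioi] at h
    filter_upwards [h] with y hy hmem
    have := hy hmem
    simpa [(Real.exp_pos (-y)).ne'] using this
  have hae : w =ᵐ[volume] 0 := by
    filter_upwards [hA1, hA2] with y hy1 hy2
    rcases le_total y x₁ with h | h
    · exact hy1 h
    · rcases le_total y x₂ with h' | h'
      · exact hmid y ⟨h, h'⟩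
      · rcases eq_or_lt_of_le h' with heq | h''
        · exact hmid y ⟨h, heq.ge⟩
        · exact hy2 h''
  have := (Continuous.ae_eq_iff_eq volume hw continuous_const).mp hae
  exact fun x => congrFun this x

lemma deriv_lam2_neg (w : ℝ → ℝ) (x : ℝ) :
    deriv (lam2 fun y => -w y) x = -deriv (lam2 w) x := by
  have h : (lam2 fun y => -w y) = fun z => -lam2 w z := by
    funext z
    simp [lam2, mul_neg, integral_neg]
  rw [h, deriv.fun_neg]

end FWaux

/-- **Unique continuation for the Fornberg-Whitham equation (section 3.2).**
A signed classical solution of the Fornberg-Whitham equation whose quantity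
`H(t) = ∫_ℝ u(t,x) dx` is finite and conserved, and which vanishes on a nonempty
open subset of `(0,T) × ℝ`, vanishes identically. -/
theorem fornbergWhitham_unique_continuation (T : ℝ) (hT : 0 < T)
    (u : ℝ → ℝ → ℝ) (hu : IsFWSolution T u)
    (hsign : (∀ t ∈ Set.Ico (0:ℝ) T, ∀ x : ℝ, 0 ≤ u t x) ∨
             (∀ t ∈ Set.Ico (0:ℝ) T, ∀ x : ℝ, u t x ≤ 0))
    (hcons : ∃ c : ℝ, ∀ t ∈ Set.Ico (0:ℝ) T, (∫ x : ℝ, u t x) = c)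
    (Ω : Set (ℝ × ℝ)) (hΩopen : IsOpen Ω) (hΩne : Ω.Nonempty)
    (hΩsub : Ω ⊆ Set.Ioo (0:ℝ) T ×ˢ Set.univ)
    (hvan : ∀ p ∈ Ω, u p.1 p.2 = 0) :
    ∀ t ∈ Set.Ico (0:ℝ) T, ∀ x : ℝ, u t x = 0 := by
  obtain ⟨c, hc⟩ := hcons
  obtain ⟨⟨t₀, x₀⟩, hp⟩ := hΩne
  obtain ⟨ε, hε, hball⟩ := Metric.isOpen_iff.mp hΩopen _ hp
  have ht₀ : t₀ ∈ Set.Ioo (0:ℝ) T := (hΩsub hp).1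
  obtain ⟨hreg, hdert, hpde⟩ := hu
  have ht₀' : t₀ ∈ Set.Ico (0:ℝ) T := ⟨ht₀.1.le, ht₀.2⟩
  obtain ⟨hC1, -, hI, -, -⟩ := hreg t₀ ht₀'
  have hwc : Continuous (u t₀) := hC1.continuous
  have hball' : ∀ s x : ℝ, dist s t₀ < ε → dist x x₀ < ε → u s x = 0 := by
    intro s x hs hx
    exact hvan (s, x) (hball (by simp [Metric.mem_ball, Prod.dist_eq, max_lt hs hx]))
  have hder0 : ∀ x : ℝ, dist x x₀ < ε → deriv (lam2 (u t₀)) x = 0 := by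
    intro x hx
    have h1 : deriv (fun s => u s x) t₀ = 0 := by
      have he : (fun s => u s x) =ᶠ[nhds t₀] fun _ => (0:ℝ) := by
        filter_upwards [Metric.ball_mem_nhds t₀ hε] with s hs
        exact hball' s x hs hx
      rw [he.deriv_eq, deriv_const]
    have h2 : deriv (u t₀) x = 0 := by
      have hpos : (0:ℝ) < ε - dist x x₀ := by linarith
      have he : (u t₀) =ᶠ[nhds x] fun _ => (0:ℝ) := by
        filter_upwards [Metric.ball_mem_nhds x hpos] with y hy
        refine hball' t₀ y (by simpa using hε) ?_
        rw [Metric.mem_ball] at hy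
        calc dist y x₀ ≤ dist y x + dist x x₀ := dist_triangle _ _ _
          _ < ε := by linarith
      rw [he.deriv_eq, deriv_const]
    have hp := hpde t₀ ht₀ x
    rw [h1, h2] at hp
    linarith [hp]
  -- u t₀ vanishes on the middle interval
  have hmid : ∀ x ∈ Icc (x₀ - ε/2) (x₀ + ε/2), u t₀ x = 0 := by
    intro x hx
    obtain ⟨hxl, hxr⟩ := hx
    refine hball' t₀ x (by simpa using hε) ?_
    rw [Real.dist_eq, abs_lt]
    constructor <;> linarith
  have h12 : x₀ - ε/2 < x₀ + ε/2 := by linarith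
  have hd1 : deriv (lam2 (u t₀)) (x₀ - ε/2) = 0 := by
    refine hder0 _ ?_
    rw [Real.dist_eq, abs_lt]; constructor <;> linarith
  have hd2 : deriv (lam2 (u t₀)) (x₀ + ε/2) = 0 := by
    refine hder0 _ ?_
    rw [Real.dist_eq, abs_lt]; constructor <;> linarith
  -- u t₀ ≡ 0
  have ht0zero : ∀ x, u t₀ x = 0 := by
    rcases hsign with hpos | hneg
    · exact slice_zero hwc hI (hpos t₀ ht₀') h12 hmid hd1 hd2
    · have h := slice_zero (w := fun x => -u t₀ x) hwc.neg hI.neg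
        (fun x => neg_nonneg.2 (hneg t₀ ht₀' x)) h12
        (fun x hx => by show -u t₀ x = 0; rw [hmid x hx, neg_zero])
        (by rw [deriv_lam2_neg, hd1, neg_zero])
        (by rw [deriv_lam2_neg, hd2, neg_zero])
      intro x
      have hx : -u t₀ x = 0 := h x
      linarith
  -- hence c = 0
  have hc0 : c = 0 := by
    rw [← hc t₀ ht₀']
    simp only [ht0zero]
    exact integral_zero _ _
  -- conclude for every t
  intro t ht x
  obtain ⟨hC1t, -, hIt, -, -⟩ := hreg t ht
  have hint0 : (∫ x : ℝ, u t x) = 0 := by rw [hc t ht, hc0]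
  rcases hsign with hpos | hneg
  · exact nonneg_integral_zero hC1t.continuous hIt (hpos t ht) hint0 x
  · have h := nonneg_integral_zero (w := fun x => -u t x) hC1t.continuous.neg hIt.neg
      (fun x => neg_nonneg.2 (hneg t ht x)) (by rw [integral_neg, hint0, neg_zero]) x
    have hx : -u t x = 0 := h
    linarith
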